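/- Let X be an ℝ^d-valued random vector whose norm has polynomial tail of index γ > 0 in the sense that lim_{r→∞} r^γ · P(‖X‖ > r) = 1, let Z be a standard Gaussian vector on ℝ^d independent of X, and let t > 0. Then the Gaussian-smoothed vector X_t = X + √t · Z has the same tail behavior: lim_{r→∞} r^γ · P(‖X_t‖ > r) = 1. -/

import Mathlib

open MeasureTheory ProbabilityTheory Filter

/-- Density of the Gaussian distribution `N(m, σ² I_d)` on `ℝ^d`. -/
noncomputable def gaussianPdf (d : ℕ) (m : EuclideanSpace ℝ (Fin d)) (σ : ℝ)
    (x : EuclideanSpace ℝ (Fin d)) : ℝ :=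
  (2 * Real.pi * σ ^ 2) ^ (-(d : ℝ) / 2) * Real.exp (-‖x - m‖ ^ 2 / (2 * σ ^ 2))

/-- The Gaussian measure `N(m, σ² I_d)` on `ℝ^d`. -/
noncomputable def gaussianMeasure (d : ℕ) (m : EuclideanSpace ℝ (Fin d)) (σ : ℝ) :
    Measure (EuclideanSpace ℝ (Fin d)) :=
  volume.withDensity fun x => ENNReal.ofReal (gaussianPdf d m σ x)

lemma gaussTail (d : ℕ) : ∃ K : ℝ, 0 ≤ K ∧ ∀ s : ℝ, 0 ≤ s →
    ((gaussianMeasure d 0 1) {x | s < ‖x‖}).toReal ≤ K * Real.exp (-(s ^ 2) / 4) := by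
  -- integrability of the quarter-Gaussian
  have hbase : Integrable (fun x : EuclideanSpace ℝ (Fin d) => Real.exp (-‖x‖ ^ 2 / 4)) := by
    have h := (GaussianFourier.integrable_cexp_neg_mul_sq_norm_add
      (V := EuclideanSpace ℝ (Fin d)) (b := (1/4 : ℂ)) (by norm_num) 0 0).norm
    refine h.congr ?_
    filter_upwards with v
    rw [Complex.norm_exp]
    congr 1
    simp [Complex.add_re, Complex.mul_re, Complex.ofReal_re, ← Complex.ofReal_pow]
    ring
  have hg : Integrable (fun x : EuclideanSpace ℝ (Fin d) =>
      (2 * Real.pi) ^ (-(d : ℝ) / 2) * Real.exp (-‖x‖ ^ 2 / 4)) := hbase.const_mul _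
  set g : EuclideanSpace ℝ (Fin d) → ℝ :=
    fun x => (2 * Real.pi) ^ (-(d : ℝ) / 2) * Real.exp (-‖x‖ ^ 2 / 4) with hgdef
  have hgnn : ∀ x, 0 ≤ g x := fun x => by
    apply mul_nonneg (Real.rpow_nonneg (by positivity) _) (Real.exp_nonneg _)
  set K₀ : ENNReal := ∫⁻ x, ENNReal.ofReal (g x) with hK₀def
  have hK₀ : K₀ < ⊤ := by
    rw [hK₀def]
    exact (hasFiniteIntegral_iff_ofReal (Eventually.of_forall hgnn)).1 hg.hasFiniteIntegral
  refine ⟨K₀.toReal, ENNReal.toReal_nonneg, fun s hs => ?_⟩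
  have hS : MeasurableSet {x : EuclideanSpace ℝ (Fin d) | s < ‖x‖} :=
    measurableSet_lt measurable_const measurable_norm
  have hpdf : ∀ x : EuclideanSpace ℝ (Fin d),
      gaussianPdf d 0 1 x = (2 * Real.pi) ^ (-(d : ℝ) / 2) * Real.exp (-‖x‖ ^ 2 / 2) := by
    intro x; simp [gaussianPdf]
  have hmeasle : gaussianMeasure d 0 1 {x | s < ‖x‖}
      ≤ ENNReal.ofReal (Real.exp (-(s ^ 2) / 4)) * K₀ := by
    rw [gaussianMeasure, withDensity_apply _ hS]
    calc ∫⁻ x in {x | s < ‖x‖}, ENNReal.ofReal (gaussianPdf d 0 1 x)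
        ≤ ∫⁻ x in {x | s < ‖x‖},
            ENNReal.ofReal (Real.exp (-(s ^ 2) / 4)) * ENNReal.ofReal (g x) := by
          refine setLIntegral_mono' hS (fun x hx => ?_)
          rw [← ENNReal.ofReal_mul (Real.exp_nonneg _)]
          apply ENNReal.ofReal_le_ofReal
          rw [hpdf x, hgdef]
          have hs2 : s ^ 2 ≤ ‖x‖ ^ 2 := by
            apply pow_le_pow_left₀ hs (le_of_lt hx)
          rw [mul_left_comm]
          apply mul_le_mul_of_nonneg_left _ (Real.rpow_nonneg (by positivity) _)
          rw [← Real.exp_add]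
          apply Real.exp_le_exp.2
          linarith
      _ = ENNReal.ofReal (Real.exp (-(s ^ 2) / 4)) *
            ∫⁻ x in {x | s < ‖x‖}, ENNReal.ofReal (g x) :=
          lintegral_const_mul' _ _ ENNReal.ofReal_ne_top
      _ ≤ ENNReal.ofReal (Real.exp (-(s ^ 2) / 4)) * K₀ := by
          apply mul_le_mul_right
          rw [hK₀def]
          exact setLIntegral_le_lintegral _ _
  have hne : ENNReal.ofReal (Real.exp (-(s ^ 2) / 4)) * K₀ ≠ ⊤ :=
    ENNReal.mul_ne_top ENNReal.ofReal_ne_top hK₀.ne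
  have := ENNReal.toReal_mono hne hmeasle
  rwa [ENNReal.toReal_mul, ENNReal.toReal_ofReal (Real.exp_nonneg _), mul_comm] at this

lemma gaussTendsto (d : ℕ) (γ a : ℝ) (ha : 0 < a) :
    Tendsto (fun r : ℝ => r ^ γ * ((gaussianMeasure d 0 1) {x | a * r < ‖x‖}).toReal)
      atTop (nhds 0) := by
  obtain ⟨K, hK, hbound⟩ := gaussTail d
  have hup : Tendsto (fun r : ℝ => K * (r ^ γ * Real.exp (-(a ^ 2 / 4) * r))) atTop (nhds 0) := by
    have := (tendsto_rpow_mul_exp_neg_mul_atTop_nhds_zero γ (a ^ 2 / 4) (by positivity)).const_mul K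
    simpa using this
  refine tendsto_of_tendsto_of_tendsto_of_le_of_le' tendsto_const_nhds hup ?_ ?_
  · filter_upwards [eventually_ge_atTop (0 : ℝ)] with r hr
    exact mul_nonneg (Real.rpow_nonneg hr _) ENNReal.toReal_nonneg
  · filter_upwards [eventually_ge_atTop (1 : ℝ)] with r hr
    have hr0 : (0 : ℝ) ≤ r := by linarith
    have h1 : ((gaussianMeasure d 0 1) {x | a * r < ‖x‖}).toReal
        ≤ K * Real.exp (-((a * r) ^ 2) / 4) := hbound (a * r) (by positivity)
    have h2 : Real.exp (-((a * r) ^ 2) / 4) ≤ Real.exp (-(a ^ 2 / 4) * r) := by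
      apply Real.exp_le_exp.2
      nlinarith [sq_nonneg (a * r), sq_nonneg a]
    calc r ^ γ * ((gaussianMeasure d 0 1) {x | a * r < ‖x‖}).toReal
        ≤ r ^ γ * (K * Real.exp (-((a * r) ^ 2) / 4)) :=
          mul_le_mul_of_nonneg_left h1 (Real.rpow_nonneg hr0 _)
      _ ≤ r ^ γ * (K * Real.exp (-(a ^ 2 / 4) * r)) := by
          apply mul_le_mul_of_nonneg_left _ (Real.rpow_nonneg hr0 _)
          exact mul_le_mul_of_nonneg_left h2 hK
      _ = K * (r ^ γ * Real.exp (-(a ^ 2 / 4) * r)) := by ring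

/-- **Gaussian smoothing preserves polynomial tail behavior.**
If `‖X‖` has polynomial tail of index `γ > 0`, i.e. `r^γ P(‖X‖ > r) → 1` as `r → ∞`,
`Z` is a standard Gaussian vector independent of `X`, and `t > 0`, then the
Gaussian-smoothed vector `X_t = X + √t Z` satisfies `r^γ P(‖X_t‖ > r) → 1`. -/
theorem gaussian_smoothing_preserves_tail
    (d : ℕ) (Ω : Type) [MeasurableSpace Ω] (μ : Measure Ω) [IsProbabilityMeasure μ]
    (X Z : Ω → EuclideanSpace ℝ (Fin d))
    (hXmeas : Measurable X) (hZmeas : Measurable Z)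
    (hindep : IndepFun X Z μ)
    (hZlaw : Measure.map Z μ = gaussianMeasure d 0 1)
    (γ : ℝ) (hγ : 0 < γ)
    (htail : Tendsto (fun r : ℝ => r ^ γ * (μ {ω | r < ‖X ω‖}).toReal) atTop (nhds 1))
    (t : ℝ) (ht : 0 < t) :
    Tendsto (fun r : ℝ => r ^ γ * (μ {ω | r < ‖X ω + Real.sqrt t • Z ω‖}).toReal)
      atTop (nhds 1) := by
  have hst : 0 < Real.sqrt t := Real.sqrt_pos.2 ht
  -- rescaled X-tail limits
  have tendX : ∀ c : ℝ, 0 < c →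
      Tendsto (fun r : ℝ => r ^ γ * (μ {ω | c * r < ‖X ω‖}).toReal) atTop
        (nhds (c ^ (-γ))) := by
    intro c hc
    have h1 : Tendsto (fun r : ℝ => c * r) atTop atTop := tendsto_id.const_mul_atTop hc
    have h2 := htail.comp h1
    have h3 := h2.const_mul (c ^ (-γ))
    rw [mul_one] at h3
    refine h3.congr' ?_
    filter_upwards [eventually_ge_atTop (0 : ℝ)] with r hr
    have hone : c ^ (-γ) * c ^ γ = 1 := by
      rw [← Real.rpow_add hc, neg_add_cancel, Real.rpow_zero]
    show c ^ (-γ) * ((c * r) ^ γ * _) = r ^ γ * _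
    calc c ^ (-γ) * ((c * r) ^ γ * (μ {ω | c * r < ‖X ω‖}).toReal)
        = c ^ (-γ) * c ^ γ * (r ^ γ * (μ {ω | c * r < ‖X ω‖}).toReal) := by
          rw [Real.mul_rpow hc.le hr]; ring
      _ = r ^ γ * (μ {ω | c * r < ‖X ω‖}).toReal := by rw [hone, one_mul]
  -- smoothed-noise tail limits
  have tendZ : ∀ b : ℝ, 0 < b →
      Tendsto (fun r : ℝ => r ^ γ * (μ {ω | b * r < ‖Real.sqrt t • Z ω‖}).toReal) atTop
        (nhds 0) := by
    intro b hb
    have ha : 0 < b / Real.sqrt t := div_pos hb hst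
    have key := gaussTendsto d γ (b / Real.sqrt t) ha
    refine key.congr fun r => ?_
    congr 2
    have hS : MeasurableSet {x : EuclideanSpace ℝ (Fin d) | b / Real.sqrt t * r < ‖x‖} :=
      measurableSet_lt measurable_const measurable_norm
    rw [← hZlaw, Measure.map_apply hZmeas hS]
    congr 1
    ext ω
    simp only [Set.mem_preimage, Set.mem_setOf_eq, norm_smul, Real.norm_eq_abs,
      abs_of_nonneg (Real.sqrt_nonneg t)]
    rw [div_mul_eq_mul_div, div_lt_iff₀ hst, mul_comm ‖Z ω‖ (Real.sqrt t)]
  -- set-inclusion / measure subadditivity helper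
  have hmeas_le : ∀ S A B : Set Ω, S ⊆ A ∪ B → (μ S).toReal ≤ (μ A).toReal + (μ B).toReal := by
    intro S A B hsub
    have h1 : μ S ≤ μ A + μ B := (measure_mono hsub).trans (measure_union_le _ _)
    have h2 := ENNReal.toReal_mono
      (ENNReal.add_ne_top.2 ⟨measure_ne_top μ A, measure_ne_top μ B⟩) h1
    rwa [ENNReal.toReal_add (measure_ne_top μ A) (measure_ne_top μ B)] at h2
  rw [Metric.tendsto_nhds]
  intro ε hε
  -- choose c₁ < 1 with c₁^(-γ) < 1 + ε
  have hccont : Tendsto (fun c : ℝ => c ^ (-γ)) (nhds 1) (nhds 1) := by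
    have := (Real.continuousAt_rpow_const 1 (-γ) (Or.inl one_ne_zero)).tendsto
    simpa [Real.one_rpow] using this
  obtain ⟨c₁, hc₁0, hc₁1, hc₁ε⟩ : ∃ c : ℝ, 0 < c ∧ c < 1 ∧ c ^ (-γ) < 1 + ε := by
    have h2 : ∀ᶠ c in nhds (1 : ℝ), c ^ (-γ) < 1 + ε :=
      hccont.eventually_lt_const (by linarith)
    have h1 : ∀ᶠ c in nhds (1 : ℝ), 0 < c := eventually_gt_nhds one_pos
    have h3 : ∀ᶠ c in nhdsWithin (1 : ℝ) (Set.Iio 1), 0 < c ∧ c ^ (-γ) < 1 + ε :=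
      (h1.and h2).filter_mono nhdsWithin_le_nhds
    obtain ⟨c, ⟨hc0, hcε⟩, hc1⟩ := (h3.and self_mem_nhdsWithin).exists
    exact ⟨c, hc0, hc1, hcε⟩
  -- choose c₂ > 1 with 1 - ε < c₂^(-γ)
  obtain ⟨c₂, hc₂1, hc₂ε⟩ : ∃ c : ℝ, 1 < c ∧ 1 - ε < c ^ (-γ) := by
    have h2 : ∀ᶠ c in nhds (1 : ℝ), 1 - ε < c ^ (-γ) :=
      hccont.eventually_const_lt (by linarith)
    have h3 : ∀ᶠ c in nhdsWithin (1 : ℝ) (Set.Ioi 1), 1 - ε < c ^ (-γ) :=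
      h2.filter_mono nhdsWithin_le_nhds
    obtain ⟨c, hcε, hc1⟩ := (h3.and self_mem_nhdsWithin).exists
    exact ⟨c, hc1, hcε⟩
  have hc₂0 : 0 < c₂ := lt_trans one_pos hc₂1
  -- upper bound
  have hub : ∀ᶠ r in atTop,
      r ^ γ * (μ {ω | r < ‖X ω + Real.sqrt t • Z ω‖}).toReal < 1 + ε := by
    have hsum := (tendX c₁ hc₁0).add (tendZ (1 - c₁) (by linarith))
    rw [add_zero] at hsum
    have hev := hsum.eventually_lt_const hc₁ε
    filter_upwards [hev, eventually_ge_atTop (0 : ℝ)] with r h1 hr0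
    have hsub : {ω | r < ‖X ω + Real.sqrt t • Z ω‖}
        ⊆ {ω | c₁ * r < ‖X ω‖} ∪ {ω | (1 - c₁) * r < ‖Real.sqrt t • Z ω‖} := by
      intro ω hω
      by_contra h
      simp only [Set.mem_union, Set.mem_setOf_eq, not_or, not_lt] at h
      have := norm_add_le (X ω) (Real.sqrt t • Z ω)
      have hω' : r < ‖X ω + Real.sqrt t • Z ω‖ := hω
      linarith [h.1, h.2]
    calc r ^ γ * (μ {ω | r < ‖X ω + Real.sqrt t • Z ω‖}).toReal
        ≤ r ^ γ * ((μ {ω | c₁ * r < ‖X ω‖}).toReal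
            + (μ {ω | (1 - c₁) * r < ‖Real.sqrt t • Z ω‖}).toReal) :=
          mul_le_mul_of_nonneg_left (hmeas_le _ _ _ hsub) (Real.rpow_nonneg hr0 _)
      _ = r ^ γ * (μ {ω | c₁ * r < ‖X ω‖}).toReal
            + r ^ γ * (μ {ω | (1 - c₁) * r < ‖Real.sqrt t • Z ω‖}).toReal := by ring
      _ < 1 + ε := h1
  -- lower bound
  have hlb : ∀ᶠ r in atTop,
      1 - ε < r ^ γ * (μ {ω | r < ‖X ω + Real.sqrt t • Z ω‖}).toReal := by
    have hdiff := (tendX c₂ hc₂0).sub (tendZ (c₂ - 1) (by linarith))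
    rw [sub_zero] at hdiff
    have hev := hdiff.eventually_const_lt hc₂ε
    filter_upwards [hev, eventually_ge_atTop (0 : ℝ)] with r h1 hr0
    have hsub : {ω | c₂ * r < ‖X ω‖}
        ⊆ {ω | r < ‖X ω + Real.sqrt t • Z ω‖} ∪ {ω | (c₂ - 1) * r < ‖Real.sqrt t • Z ω‖} := by
      intro ω hω
      by_contra h
      simp only [Set.mem_union, Set.mem_setOf_eq, not_or, not_lt] at h
      have hX : ‖X ω‖ ≤ ‖X ω + Real.sqrt t • Z ω‖ + ‖Real.sqrt t • Z ω‖ := by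
        have := norm_add_le (X ω + Real.sqrt t • Z ω) (-(Real.sqrt t • Z ω))
        simpa using this
      have hω' : c₂ * r < ‖X ω‖ := hω
      linarith [h.1, h.2]
    have hkey : r ^ γ * (μ {ω | c₂ * r < ‖X ω‖}).toReal
        ≤ r ^ γ * (μ {ω | r < ‖X ω + Real.sqrt t • Z ω‖}).toReal
          + r ^ γ * (μ {ω | (c₂ - 1) * r < ‖Real.sqrt t • Z ω‖}).toReal := by
      have := mul_le_mul_of_nonneg_left (hmeas_le _ _ _ hsub) (Real.rpow_nonneg hr0 γ)
      linarith [this, mul_add (r ^ γ) (μ {ω | r < ‖X ω + Real.sqrt t • Z ω‖}).toReal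
        (μ {ω | (c₂ - 1) * r < ‖Real.sqrt t • Z ω‖}).toReal]
    linarith
  filter_upwards [hub, hlb] with r h1 h2
  rw [Real.dist_eq, abs_lt]
  constructor <;> linarith
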